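/- Assume f and g are differentiable at a point x ∈ ℝ^d and g(x) > 0, with g continuous and positive in a neighborhood of x. Then as δ → 0 in ℝ^d, KL(x,δ) = δ^T I(x) δ + o(‖δ‖²), where I(x) = g(x)^{-1} ∇f(x) ∇f(x)^T + (2 g(x)²)^{-1} ∇g(x) ∇g(x)^T; that is, (KL(x,δ) − δ^T I(x) δ)/‖δ‖² → 0 as δ → 0. -/

import Mathlib

open MeasureTheory Real Filter Topology

/-- The conditional Gaussian density `ρ(y|x) = (2π g(x))^{-1/2} exp(−(y − f(x))²/(2 g(x)))`. -/
noncomputable def condDensity (d : ℕ) (f g : (Fin d → ℝ) → ℝ) (x : Fin d → ℝ) (y : ℝ) : ℝ :=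
  (Real.sqrt (2 * Real.pi * g x))⁻¹ * Real.exp (-(y - f x) ^ 2 / (2 * g x))

/-- The symmetric Kullback–Leibler (J-)divergence between the conditional densities
at `x + δ` and `x`. -/
noncomputable def symKL (d : ℕ) (f g : (Fin d → ℝ) → ℝ) (x δ : Fin d → ℝ) : ℝ :=
  ∫ y : ℝ, (condDensity d f g (x + δ) y - condDensity d f g x y) *
    Real.log (condDensity d f g (x + δ) y / condDensity d f g x y)

lemma rpow_two_fun (b : ℝ) :
    (fun x : ℝ => x ^ (2:ℝ) * Real.exp (-b * x ^ 2)) = fun x => x ^ 2 * Real.exp (-b * x ^ 2) := by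
  funext x
  rw [← Real.rpow_natCast x 2]
  norm_num

lemma integrable_sq_mul_exp {b : ℝ} (hb : 0 < b) :
    Integrable fun x : ℝ => x ^ 2 * Real.exp (-b * x ^ 2) := by
  have h := integrable_rpow_mul_exp_neg_mul_sq hb (s := 2) (by norm_num)
  rwa [rpow_two_fun] at h

lemma integral_mul_exp_eq_zero (b : ℝ) : ∫ x : ℝ, x * Real.exp (-b * x ^ 2) = 0 := by
  have h : ∫ x : ℝ, (fun x : ℝ => x * Real.exp (-b * x ^ 2)) (-x)
      = ∫ x : ℝ, x * Real.exp (-b * x ^ 2) :=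
    integral_neg_eq_self (fun x : ℝ => x * Real.exp (-b * x ^ 2)) volume
  have h2 : (fun x : ℝ => (fun x : ℝ => x * Real.exp (-b * x ^ 2)) (-x))
      = fun x : ℝ => -(x * Real.exp (-b * x ^ 2)) := by
    funext x; simp [neg_sq]
  rw [h2, integral_neg] at h
  linarith

lemma integral_sq_mul_exp {b : ℝ} (hb : 0 < b) :
    ∫ x : ℝ, x ^ 2 * Real.exp (-b * x ^ 2) = Real.sqrt (π / b) / (2 * b) := by
  have h0 : ∫ x : ℝ, x ^ 2 * Real.exp (-b * x ^ 2)
      = 2 * ∫ x in Set.Ioi (0:ℝ), x ^ 2 * Real.exp (-b * x ^ 2) := by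
    rw [← integral_comp_abs (f := fun x => x ^ 2 * Real.exp (-b * x ^ 2))]
    congr 1; funext x; rw [sq_abs]
  have h1 := integral_rpow_mul_exp_neg_mul_rpow (p := 2) (q := 2)
    (by norm_num) (by norm_num) hb
  rw [show (fun x : ℝ => x ^ (2:ℝ) * Real.exp (-b * x ^ (2:ℝ))) = _ from ?_] at h1
  rotate_left
  · exact fun x : ℝ => x ^ 2 * Real.exp (-b * x ^ 2)
  · funext x
    rw [← Real.rpow_natCast x 2]
    norm_num
  have hG : Real.Gamma ((2 + 1) / 2) = Real.sqrt π / 2 := by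
    rw [show ((2:ℝ) + 1) / 2 = 1/2 + 1 by norm_num, Real.Gamma_add_one (by norm_num),
      Real.Gamma_one_half_eq]
    ring
  rw [h0, h1, hG, Real.sqrt_div pi_pos.le]
  have hbr : b ^ (-((2:ℝ) + 1) / 2) = (b * Real.sqrt b)⁻¹ := by
    rw [show -((2:ℝ) + 1) / 2 = -(1 + 1/2) by norm_num, Real.rpow_neg hb.le,
      Real.rpow_add hb, Real.rpow_one, ← Real.sqrt_eq_rpow]
  rw [hbr]
  have hsb : Real.sqrt b ≠ 0 := (Real.sqrt_pos.mpr hb).ne'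
  field_simp

noncomputable def gaussd (m v y : ℝ) : ℝ :=
  (Real.sqrt (2 * Real.pi * v))⁻¹ * Real.exp (-(y - m) ^ 2 / (2 * v))

lemma gaussd_pos {v : ℝ} (hv : 0 < v) (m y : ℝ) : 0 < gaussd m v y := by
  unfold gaussd
  have : 0 < Real.sqrt (2 * Real.pi * v) := Real.sqrt_pos.mpr (by positivity)
  positivity

lemma gaussd_eq {v : ℝ} (m : ℝ) :
    gaussd m v = fun y => (Real.sqrt (2 * Real.pi * v))⁻¹ *
      ((fun t : ℝ => Real.exp (-(2*v)⁻¹ * t ^ 2)) (y - m)) := by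
  funext y
  unfold gaussd
  congr 1
  rw [div_eq_mul_inv]
  ring_nf

lemma integrable_gaussd {v : ℝ} (hv : 0 < v) (m : ℝ) : Integrable (gaussd m v) := by
  have hb : 0 < (2*v)⁻¹ := by positivity
  rw [gaussd_eq]
  exact (((integrable_exp_neg_mul_sq hb).comp_sub_right m).const_mul _)

lemma integral_gaussd {v : ℝ} (hv : 0 < v) (m : ℝ) : ∫ y, gaussd m v y = 1 := by
  have hb : 0 < (2*v)⁻¹ := by positivity
  rw [gaussd_eq, MeasureTheory.integral_const_mul _ _,
    integral_sub_right_eq_self (fun t : ℝ => Real.exp (-(2*v)⁻¹ * t ^ 2)) m,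
    integral_gaussian, show π / (2*v)⁻¹ = 2 * π * v by field_simp]
  exact inv_mul_cancel₀ (Real.sqrt_pos.mpr (by positivity)).ne'

lemma integrable_gaussd_sq {v : ℝ} (hv : 0 < v) (m c : ℝ) :
    Integrable fun y => gaussd m v y * (y - c) ^ 2 := by
  have hb : 0 < (2*v)⁻¹ := by positivity
  have hA : Integrable fun t : ℝ => t ^ 2 * Real.exp (-(2*v)⁻¹ * t ^ 2) :=
    integrable_sq_mul_exp hb
  have hB : Integrable fun t : ℝ => (2 * (c - m)) * (t * Real.exp (-(2*v)⁻¹ * t ^ 2)) :=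
    (integrable_mul_exp_neg_mul_sq hb).const_mul _
  have hC : Integrable fun t : ℝ => (c - m) ^ 2 * Real.exp (-(2*v)⁻¹ * t ^ 2) :=
    (integrable_exp_neg_mul_sq hb).const_mul _
  have hAB : Integrable fun t : ℝ => t ^ 2 * Real.exp (-(2*v)⁻¹ * t ^ 2)
      - (2 * (c - m)) * (t * Real.exp (-(2*v)⁻¹ * t ^ 2)) := hA.sub hB
  have hABC : Integrable fun t : ℝ => (t ^ 2 * Real.exp (-(2*v)⁻¹ * t ^ 2)
      - (2 * (c - m)) * (t * Real.exp (-(2*v)⁻¹ * t ^ 2)))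
      + (c - m) ^ 2 * Real.exp (-(2*v)⁻¹ * t ^ 2) := hAB.add hC
  have base : Integrable fun t : ℝ => Real.exp (-(2*v)⁻¹ * t ^ 2) * (t - (c - m)) ^ 2 := by
    refine hABC.congr (Filter.Eventually.of_forall fun t => ?_)
    ring
  have h2 := (base.comp_sub_right m).const_mul ((Real.sqrt (2 * Real.pi * v))⁻¹)
  refine h2.congr (Filter.Eventually.of_forall fun y => ?_)
  rw [gaussd_eq]
  ring

lemma integral_gaussd_sq {v : ℝ} (hv : 0 < v) (m c : ℝ) :
    ∫ y, gaussd m v y * (y - c) ^ 2 = v + (m - c) ^ 2 := by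
  have hb : 0 < (2*v)⁻¹ := by positivity
  have e1 : (fun y => gaussd m v y * (y - c) ^ 2)
      = fun y => (Real.sqrt (2 * Real.pi * v))⁻¹ *
        ((fun t : ℝ => Real.exp (-(2*v)⁻¹ * t ^ 2) * (t - (c - m)) ^ 2) (y - m)) := by
    funext y
    rw [gaussd_eq]
    ring_nf
  rw [e1, MeasureTheory.integral_const_mul _ _,
    integral_sub_right_eq_self (fun t : ℝ => Real.exp (-(2*v)⁻¹ * t ^ 2) * (t - (c - m)) ^ 2) m]
  have e2 : (fun t : ℝ => Real.exp (-(2*v)⁻¹ * t ^ 2) * (t - (c - m)) ^ 2)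
      = fun t : ℝ => (t ^ 2 * Real.exp (-(2*v)⁻¹ * t ^ 2)
          - (2 * (c - m)) * (t * Real.exp (-(2*v)⁻¹ * t ^ 2)))
          + (c - m) ^ 2 * Real.exp (-(2*v)⁻¹ * t ^ 2) := by
    funext t; ring
  have hA : Integrable fun t : ℝ => t ^ 2 * Real.exp (-(2*v)⁻¹ * t ^ 2) :=
    integrable_sq_mul_exp hb
  have hB : Integrable fun t : ℝ => (2 * (c - m)) * (t * Real.exp (-(2*v)⁻¹ * t ^ 2)) :=
    (integrable_mul_exp_neg_mul_sq hb).const_mul _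
  have hAB : Integrable fun t : ℝ => t ^ 2 * Real.exp (-(2*v)⁻¹ * t ^ 2)
      - (2 * (c - m)) * (t * Real.exp (-(2*v)⁻¹ * t ^ 2)) := hA.sub hB
  rw [e2, integral_add hAB ((integrable_exp_neg_mul_sq hb).const_mul _),
    integral_sub hA hB,
    MeasureTheory.integral_const_mul _ _, MeasureTheory.integral_const_mul _ _,
    integral_sq_mul_exp hb, integral_mul_exp_eq_zero, integral_gaussian,
    show π / (2*v)⁻¹ = 2 * π * v by field_simp]
  have hK : Real.sqrt (2 * π * v) ≠ 0 := (Real.sqrt_pos.mpr (by positivity)).ne'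
  have h2b : 2 * (2*v)⁻¹ = v⁻¹ := by field_simp
  rw [h2b]
  field_simp
  ring

lemma integrable_gaussd_quad {v : ℝ} (hv : 0 < v) (m C k₁ k₂ a₁ a₂ : ℝ) :
    Integrable fun y => gaussd m v y * (C + k₁ * (y - a₁) ^ 2 + k₂ * (y - a₂) ^ 2) := by
  have h0 : Integrable fun y => C * gaussd m v y := (integrable_gaussd hv m).const_mul C
  have h1 : Integrable fun y => k₁ * (gaussd m v y * (y - a₁) ^ 2) :=
    (integrable_gaussd_sq hv m a₁).const_mul k₁
  have h2 : Integrable fun y => k₂ * (gaussd m v y * (y - a₂) ^ 2) :=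
    (integrable_gaussd_sq hv m a₂).const_mul k₂
  have h01 : Integrable fun y => C * gaussd m v y + k₁ * (gaussd m v y * (y - a₁) ^ 2) :=
    h0.add h1
  have h012 : Integrable fun y => (C * gaussd m v y + k₁ * (gaussd m v y * (y - a₁) ^ 2))
      + k₂ * (gaussd m v y * (y - a₂) ^ 2) := h01.add h2
  exact h012.congr (Filter.Eventually.of_forall fun y => by ring)

lemma integral_gaussd_quad {v : ℝ} (hv : 0 < v) (m C k₁ k₂ a₁ a₂ : ℝ) :
    ∫ y, gaussd m v y * (C + k₁ * (y - a₁) ^ 2 + k₂ * (y - a₂) ^ 2)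
      = C + k₁ * (v + (m - a₁) ^ 2) + k₂ * (v + (m - a₂) ^ 2) := by
  have h0 : Integrable fun y => C * gaussd m v y := (integrable_gaussd hv m).const_mul C
  have h1 : Integrable fun y => k₁ * (gaussd m v y * (y - a₁) ^ 2) :=
    (integrable_gaussd_sq hv m a₁).const_mul k₁
  have h2 : Integrable fun y => k₂ * (gaussd m v y * (y - a₂) ^ 2) :=
    (integrable_gaussd_sq hv m a₂).const_mul k₂
  have h01 : Integrable fun y => C * gaussd m v y + k₁ * (gaussd m v y * (y - a₁) ^ 2) :=
    h0.add h1
  rw [show (fun y => gaussd m v y * (C + k₁ * (y - a₁) ^ 2 + k₂ * (y - a₂) ^ 2))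
      = fun y => (C * gaussd m v y + k₁ * (gaussd m v y * (y - a₁) ^ 2))
        + k₂ * (gaussd m v y * (y - a₂) ^ 2) from funext fun y => by ring,
    integral_add h01 h2, integral_add h0 h1,
    MeasureTheory.integral_const_mul _ _, MeasureTheory.integral_const_mul _ _,
    MeasureTheory.integral_const_mul _ _,
    integral_gaussd hv m, integral_gaussd_sq hv m a₁, integral_gaussd_sq hv m a₂, mul_one]

lemma symKL_closed {v₁ v₂ : ℝ} (h₁ : 0 < v₁) (h₂ : 0 < v₂) (m₁ m₂ : ℝ) :
    ∫ y, (gaussd m₁ v₁ y - gaussd m₂ v₂ y) * Real.log (gaussd m₁ v₁ y / gaussd m₂ v₂ y)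
      = (v₁ - v₂) ^ 2 / (2 * v₁ * v₂) + (m₁ - m₂) ^ 2 * (v₁ + v₂) / (2 * v₁ * v₂) := by
  set C : ℝ := Real.log ((Real.sqrt (2 * π * v₁))⁻¹) - Real.log ((Real.sqrt (2 * π * v₂))⁻¹)
    with hC
  have hlog : ∀ y, Real.log (gaussd m₁ v₁ y / gaussd m₂ v₂ y)
      = C + (-(2*v₁)⁻¹) * (y - m₁) ^ 2 + (2*v₂)⁻¹ * (y - m₂) ^ 2 := by
    intro y
    have p₁ : (0:ℝ) < gaussd m₁ v₁ y := gaussd_pos h₁ _ _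
    have p₂ : (0:ℝ) < gaussd m₂ v₂ y := gaussd_pos h₂ _ _
    have hs₁ : (0:ℝ) < (Real.sqrt (2 * π * v₁))⁻¹ := by
      have := Real.sqrt_pos.mpr (show (0:ℝ) < 2 * π * v₁ by positivity); positivity
    have hs₂ : (0:ℝ) < (Real.sqrt (2 * π * v₂))⁻¹ := by
      have := Real.sqrt_pos.mpr (show (0:ℝ) < 2 * π * v₂ by positivity); positivity
    rw [Real.log_div p₁.ne' p₂.ne']
    unfold gaussd
    rw [Real.log_mul hs₁.ne' (Real.exp_pos _).ne', Real.log_mul hs₂.ne' (Real.exp_pos _).ne',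
      Real.log_exp, Real.log_exp, hC]
    ring
  have key : (fun y => (gaussd m₁ v₁ y - gaussd m₂ v₂ y) *
        Real.log (gaussd m₁ v₁ y / gaussd m₂ v₂ y))
      = fun y => gaussd m₁ v₁ y * (C + (-(2*v₁)⁻¹) * (y - m₁) ^ 2 + (2*v₂)⁻¹ * (y - m₂) ^ 2)
        - gaussd m₂ v₂ y * (C + (-(2*v₁)⁻¹) * (y - m₁) ^ 2 + (2*v₂)⁻¹ * (y - m₂) ^ 2) :=
    funext fun y => by rw [hlog y]; ring
  rw [key, integral_sub (integrable_gaussd_quad h₁ m₁ C _ _ m₁ m₂)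
      (integrable_gaussd_quad h₂ m₂ C _ _ m₁ m₂),
    integral_gaussd_quad h₁ m₁ C _ _ m₁ m₂, integral_gaussd_quad h₂ m₂ C _ _ m₁ m₂]
  field_simp
  ring

lemma quad_littleO {E : Type*} [NormedAddCommGroup E] [NormedSpace ℝ E]
    {φ w : E → ℝ} {L : E →L[ℝ] ℝ} {c : ℝ}
    (hφ : (fun δ => φ δ - L δ) =o[𝓝 0] fun δ : E => ‖δ‖)
    (hw : Tendsto w (𝓝 0) (𝓝 c)) :
    (fun δ : E => φ δ ^ 2 * w δ - (L δ) ^ 2 * c) =o[𝓝 0] fun δ : E => ‖δ‖ ^ 2 := by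
  have hL : (fun δ : E => L δ) =O[𝓝 0] fun δ : E => ‖δ‖ :=
    (L.isBigO_id (𝓝 0)).norm_right
  have hφO : (fun δ : E => φ δ) =O[𝓝 0] fun δ : E => ‖δ‖ := by
    have h := hφ.isBigO.add hL
    refine h.congr_left fun δ => ?_
    simp
  have h2 : (fun δ : E => (φ δ - L δ) * (φ δ + L δ)) =o[𝓝 0]
      fun δ : E => ‖δ‖ * ‖δ‖ := hφ.mul_isBigO (hφO.add hL)
  have hwO : w =O[𝓝 0] (fun _ : E => (1:ℝ)) := hw.isBigO_one ℝ
  have h3 : (fun δ : E => (φ δ - L δ) * (φ δ + L δ) * w δ) =o[𝓝 0]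
      fun δ : E => (‖δ‖ * ‖δ‖) * 1 := h2.mul_isBigO hwO
  have h4 : (fun δ : E => L δ * L δ) =O[𝓝 0] fun δ : E => ‖δ‖ * ‖δ‖ := hL.mul hL
  have h5 : (fun δ : E => w δ - c) =o[𝓝 0] (fun _ : E => (1:ℝ)) := by
    rw [Asymptotics.isLittleO_one_iff]
    exact tendsto_sub_nhds_zero_iff.mpr hw
  have h6 : (fun δ : E => (L δ * L δ) * (w δ - c)) =o[𝓝 0]
      fun δ : E => (‖δ‖ * ‖δ‖) * 1 := h4.mul_isLittleO h5
  have h7 := h3.add h6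
  refine h7.congr (fun δ => by ring) (fun δ => by ring)

/-- If `f, g` are differentiable at `x`, `g(x) > 0`, and `g` is continuous and
positive on a neighborhood of `x`, then `KL(x,δ) = δᵀ I(x) δ + o(‖δ‖²)` as `δ → 0`, where
`δᵀ I(x) δ = (∇f(x)·δ)²/g(x) + (∇g(x)·δ)²/(2 g(x)²)`; that is,
`(KL(x,δ) − δᵀ I(x) δ)/‖δ‖² → 0` as `δ → 0`. -/
theorem stmt_5 (d : ℕ) (hd : 1 ≤ d) (f g : (Fin d → ℝ) → ℝ)
    (x : Fin d → ℝ) (hf : DifferentiableAt ℝ f x) (hg : DifferentiableAt ℝ g x)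
    (hgx : 0 < g x) (U : Set (Fin d → ℝ)) (hU : U ∈ nhds x)
    (hgU : ContinuousOn g U) (hgUpos : ∀ z ∈ U, 0 < g z) :
    Tendsto
      (fun δ : Fin d → ℝ =>
        (symKL d f g x δ -
            ((fderiv ℝ f x δ) ^ 2 / g x + (fderiv ℝ g x δ) ^ 2 / (2 * g x ^ 2))) / ‖δ‖ ^ 2)
      (𝓝[≠] (0 : Fin d → ℝ)) (𝓝 0) := by
  have htx : Tendsto (fun δ : Fin d → ℝ => x + δ) (𝓝 0) (𝓝 x) := by
    exact (continuous_add_left x).tendsto' 0 x (by simp)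
  have hgc : Tendsto (fun δ : Fin d → ℝ => g (x + δ)) (𝓝 0) (𝓝 (g x)) :=
    (hg.continuousAt.tendsto).comp htx
  have hgxne : g x ≠ 0 := ne_of_gt hgx
  have hfd : (fun δ : Fin d → ℝ => f (x + δ) - f x - fderiv ℝ f x δ)
      =o[𝓝 0] fun δ : Fin d → ℝ => ‖δ‖ :=
    Asymptotics.isLittleO_norm_right.mpr (hasFDerivAt_iff_isLittleO_nhds_zero.mp hf.hasFDerivAt)
  have hgd : (fun δ : Fin d → ℝ => g (x + δ) - g x - fderiv ℝ g x δ)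
      =o[𝓝 0] fun δ : Fin d → ℝ => ‖δ‖ :=
    Asymptotics.isLittleO_norm_right.mpr (hasFDerivAt_iff_isLittleO_nhds_zero.mp hg.hasFDerivAt)
  have hw1 : Tendsto (fun δ : Fin d → ℝ => (g (x + δ) + g x) / (2 * g (x + δ) * g x))
      (𝓝 0) (𝓝 ((g x)⁻¹)) := by
    have h := (hgc.add (tendsto_const_nhds (x := g x))).div
      (((tendsto_const_nhds (x := (2:ℝ))).mul hgc).mul (tendsto_const_nhds (x := g x)))
      (show 2 * g x * g x ≠ 0 by positivity)
    have e : (g x + g x) / (2 * g x * g x) = (g x)⁻¹ := by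
      rw [eq_comm, inv_eq_iff_eq_inv, eq_comm, inv_div, div_eq_iff (by simpa using hgxne)]
      ring
    rwa [e] at h
  have hw2 : Tendsto (fun δ : Fin d → ℝ => 1 / (2 * g (x + δ) * g x))
      (𝓝 0) (𝓝 ((2 * g x ^ 2)⁻¹)) := by
    have h := (tendsto_const_nhds (x := (1:ℝ))).div
      (((tendsto_const_nhds (x := (2:ℝ))).mul hgc).mul (tendsto_const_nhds (x := g x)))
      (show 2 * g x * g x ≠ 0 by positivity)
    have e : (1:ℝ) / (2 * g x * g x) = (2 * g x ^ 2)⁻¹ := by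
      rw [one_div]; congr 1; ring
    rwa [e] at h
  have hT1 := quad_littleO (φ := fun δ : Fin d → ℝ => f (x + δ) - f x) hfd hw1
  have hT2 := quad_littleO (φ := fun δ : Fin d → ℝ => g (x + δ) - g x) hgd hw2
  have hsum := hT1.add hT2
  have htend : Tendsto (fun δ : Fin d → ℝ =>
      (((f (x + δ) - f x) ^ 2 * ((g (x + δ) + g x) / (2 * g (x + δ) * g x))
          - (fderiv ℝ f x δ) ^ 2 * (g x)⁻¹)
        + ((g (x + δ) - g x) ^ 2 * (1 / (2 * g (x + δ) * g x))
          - (fderiv ℝ g x δ) ^ 2 * (2 * g x ^ 2)⁻¹)) / ‖δ‖ ^ 2)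
      (𝓝 0) (𝓝 0) := by
    refine (Asymptotics.isLittleO_iff_tendsto fun δ hδ => ?_).mp hsum
    have hδ0 : δ = 0 := by
      have := pow_eq_zero_iff (n := 2) (by norm_num) |>.mp hδ
      exact norm_eq_zero.mp this
    subst hδ0
    simp
  have hmem : ∀ᶠ δ : Fin d → ℝ in 𝓝 0, x + δ ∈ U := htx.eventually_mem hU
  have heq : ∀ᶠ δ : Fin d → ℝ in 𝓝 0, symKL d f g x δ
      = (g (x + δ) - g x) ^ 2 / (2 * g (x + δ) * g x)
        + (f (x + δ) - f x) ^ 2 * (g (x + δ) + g x) / (2 * g (x + δ) * g x) := by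
    filter_upwards [hmem] with δ hδ
    have hv₁ : 0 < g (x + δ) := hgUpos _ hδ
    exact symKL_closed hv₁ hgx (f (x + δ)) (f x)
  refine Tendsto.congr' ?_ (htend.mono_left nhdsWithin_le_nhds)
  filter_upwards [heq.filter_mono nhdsWithin_le_nhds] with δ h
  rw [h]
  ring
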